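/- arXiv:0907.2546 — 2 statements merged into one kernel-verified Lean document; each statement's English description precedes it below -/
import Mathlib

section
/- Let X, Y be metric spaces with base points x₀ ∈ X, y₀ ∈ Y, and write |x| = d(x,x₀), |y| = d(y,y₀). A map f : X → Y is cone-defined (for every sequence (x_n) in X with |x_n| ≤ An+B for some A,B one has |f(x_n)| ≤ A'n+B' for some A',B', and for any two such sequences with d(x_n,x'_n)/n → 0 one has d(f(x_n),f(x'_n))/n → 0) if and only if: (1) there exist constants A,B with |f(x)| ≤ A|x| + B for all x ∈ X, and (2) for all sequences (x_k),(y_k) in X, if (d(x_k,y_k)+1)/(|x_k|+|y_k|) → 0 then d(f(x_k),f(y_k))/(|x_k|+|y_k|) → 0. -/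
open Filter Topology

lemma tendsto_zero_iff_cd {g : ℕ → ℝ} (hg : ∀ n, 0 ≤ g n) :
    Tendsto g atTop (𝓝 0) ↔ ∀ ε > 0, ∀ᶠ n in atTop, g n < ε := by
  rw [Metric.tendsto_atTop]
  constructor
  · intro h ε hε
    obtain ⟨N, hN⟩ := h ε hε
    refine eventually_atTop.2 ⟨N, fun n hn => ?_⟩
    have := hN n hn
    rwa [Real.dist_eq, sub_zero, abs_of_nonneg (hg n)] at this
  · intro h ε hε
    obtain ⟨N, hN⟩ := eventually_atTop.1 (h ε hε)
    exact ⟨N, fun n hn => by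
      rw [Real.dist_eq, sub_zero, abs_of_nonneg (hg n)]; exact hN n hn⟩

/-- extraction with growth of a real quantity -/

lemma extraction_growth {S : ℕ → ℝ} {P : ℕ → Prop}
    (key : ∀ c : ℝ, ∀ m₀ : ℕ, ∃ m, m₀ ≤ m ∧ P m ∧ c < S m) :
    ∃ k : ℕ → ℕ, StrictMono k ∧ (∀ j, P (k j)) ∧ (∀ j, S (k j) + 1 < S (k (j+1))) := by
  classical
  let k : ℕ → ℕ := fun j => Nat.rec (key 0 0).choose
    (fun _ prev => (key (S prev + 1) (prev + 1)).choose) j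
  have hstep : ∀ j, k j + 1 ≤ k (j+1) ∧ P (k (j+1)) ∧ S (k j) + 1 < S (k (j+1)) :=
    fun j => (key (S (k j) + 1) (k j + 1)).choose_spec
  refine ⟨k, strictMono_nat_of_lt_succ (fun j => (hstep j).1), fun j => ?_, fun j => (hstep j).2.2⟩
  cases j with
  | zero => exact (key 0 0).choose_spec.2.1
  | succ i => exact (hstep i).2.1

lemma lemA {X Y : Type*} [MetricSpace X] [MetricSpace Y] (x₀ : X) (y₀ : Y) (f : X → Y)
    (h1 : ∀ x : ℕ → X, (∃ A B : ℝ, ∀ n : ℕ, dist (x n) x₀ ≤ A * n + B) →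
        ∃ A' B' : ℝ, ∀ n : ℕ, dist (f (x n)) y₀ ≤ A' * n + B') :
    ∃ A B : ℝ, ∀ x : X, dist (f x) y₀ ≤ A * dist x x₀ + B := by
  classical
  by_contra hcon
  push_neg at hcon
  -- z k : point with |f(z k)| > k |z k| + k^2
  have hz : ∀ k : ℕ, ∃ z : X, (k : ℝ) * dist z x₀ + (k:ℝ)^2 < dist (f z) y₀ := by
    intro k
    obtain ⟨z, hz⟩ := hcon (k : ℝ) ((k:ℝ)^2)
    exact ⟨z, hz⟩
  set z : ℕ → X := fun k => (hz k).choose with hzdef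
  have hzs : ∀ k : ℕ, (k : ℝ) * dist (z k) x₀ + (k:ℝ)^2 < dist (f (z k)) y₀ :=
    fun k => (hz k).choose_spec
  set P : ℕ → ℕ → Prop := fun n k => max k ⌈dist (z k) x₀⌉₊ = n with hP
  set K : ℕ → ℕ := fun n => Nat.findGreatest (P n) n with hK
  set x : ℕ → X := fun n => if P n (K n) then z (K n) else x₀ with hx
  have hxb : ∀ n : ℕ, dist (x n) x₀ ≤ 1 * n + 0 := by
    intro n
    simp only [one_mul, add_zero, hx]
    by_cases h : P n (K n)
    · rw [if_pos h]
      calc dist (z (K n)) x₀ ≤ (⌈dist (z (K n)) x₀⌉₊ : ℝ) := Nat.le_ceil _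
        _ ≤ (n : ℝ) := by
            exact_mod_cast le_trans (le_max_right _ _) (le_of_eq h)
    · simp only [h, if_neg, not_false_iff, dist_self]
      positivity
  obtain ⟨A', B', hAB⟩ := h1 x ⟨1, 0, hxb⟩
  set A := max A' 0 with hA
  set B := max B' 0 with hB
  have hA0 : 0 ≤ A := le_max_right _ _
  have hB0 : 0 ≤ B := le_max_right _ _
  have hAB' : ∀ n : ℕ, dist (f (x n)) y₀ ≤ A * n + B := by
    intro n
    refine le_trans (hAB n) (add_le_add ?_ (le_max_left _ _))
    exact mul_le_mul_of_nonneg_right (le_max_left _ _) (Nat.cast_nonneg n)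
  -- choose k large
  set k : ℕ := ⌈A⌉₊ + ⌈B⌉₊ + 2 with hk
  have hkA : A + B + 2 ≤ (k : ℝ) := by
    have h1' : A ≤ (⌈A⌉₊ : ℝ) := Nat.le_ceil _
    have h2' : B ≤ (⌈B⌉₊ : ℝ) := Nat.le_ceil _
    push_cast [hk]
    linarith
  set n : ℕ := max k ⌈dist (z k) x₀⌉₊ with hn
  have hPk : P n k := rfl
  have hkn : k ≤ n := le_max_left _ _
  have hkK : k ≤ K n := Nat.le_findGreatest hkn hPk
  have hPK : P n (K n) := Nat.findGreatest_spec hkn hPk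
  have hxn : x n = z (K n) := if_pos hPK
  set k' := K n with hk'
  set D := dist (z k') x₀ with hD
  have hD0 : 0 ≤ D := dist_nonneg
  have hnle : (n : ℝ) ≤ (k' : ℝ) + D + 1 := by
    have h1' : n = max k' ⌈D⌉₊ := hPK.symm
    have h2' : (⌈D⌉₊ : ℝ) < D + 1 := Nat.ceil_lt_add_one hD0
    have h3' : n ≤ k' + ⌈D⌉₊ := by rw [h1']; exact max_le (Nat.le_add_right _ _) (Nat.le_add_left _ _)
    have := Nat.cast_le (α := ℝ) |>.2 h3'
    push_cast at this
    linarith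
  have hkk' : (k : ℝ) ≤ (k' : ℝ) := Nat.cast_le.2 hkK
  have hbig : (k' : ℝ) * D + (k':ℝ)^2 < dist (f (z k')) y₀ := hzs k'
  have hsmall : dist (f (x n)) y₀ ≤ A * n + B := hAB' n
  rw [hxn] at hsmall
  have hc : A + B + 2 ≤ (k' : ℝ) := le_trans hkA hkk'
  nlinarith [mul_nonneg hA0 hD0, sq_nonneg ((k':ℝ) - A), mul_nonneg hB0 hD0,
    mul_le_mul_of_nonneg_right hc hD0, sq_nonneg ((k':ℝ) - A - B - 2)]

lemma lemB {X Y : Type*} [MetricSpace X] [MetricSpace Y] (x₀ : X) (y₀ : Y) (f : X → Y)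
    (h2 : ∀ x x' : ℕ → X, (∃ A B : ℝ, ∀ n : ℕ, dist (x n) x₀ ≤ A * n + B) →
        (∃ A B : ℝ, ∀ n : ℕ, dist (x' n) x₀ ≤ A * n + B) →
        Tendsto (fun n : ℕ => dist (x n) (x' n) / n) atTop (𝓝 0) →
        Tendsto (fun n : ℕ => dist (f (x n)) (f (x' n)) / n) atTop (𝓝 0))
    (x y : ℕ → X)
    (hxy : Tendsto (fun k : ℕ => (dist (x k) (y k) + 1) / (dist (x k) x₀ + dist (y k) x₀))
      atTop (𝓝 0)) :
    Tendsto (fun k : ℕ => dist (f (x k)) (f (y k)) / (dist (x k) x₀ + dist (y k) x₀))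
      atTop (𝓝 0) := by
  classical
  set S : ℕ → ℝ := fun m => dist (x m) x₀ + dist (y m) x₀ with hSdef
  have hS0 : ∀ m, 0 ≤ S m := fun m => by positivity
  rw [tendsto_zero_iff_cd (fun m => div_nonneg dist_nonneg (hS0 m))]
  by_contra hcon
  push_neg at hcon
  obtain ⟨ε, hε, hfr⟩ := hcon
  set P : ℕ → Prop := fun m => ε ≤ dist (f (x m)) (f (y m)) / S m with hPdef
  have hSpos : ∀ m, P m → 0 < S m := by
    intro m hm
    rcases lt_or_eq_of_le (hS0 m) with h | h
    · exact h
    · exfalso; rw [hPdef] at hm; simp only [← h, div_zero] at hm; linarith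
  have key : ∀ c : ℝ, ∀ m₀ : ℕ, ∃ m, m₀ ≤ m ∧ P m ∧ c < S m := by
    intro c m₀
    have hev : ∀ᶠ m in atTop, ((dist (x m) (y m) + 1) / S m < 1 / (max c 0 + 1)) ∧ m₀ ≤ m := by
      refine Eventually.and ?_ (eventually_ge_atTop m₀)
      exact (tendsto_zero_iff_cd (fun m => div_nonneg (by positivity) (hS0 m))).1 hxy _
        (by positivity)
    obtain ⟨m, hm, ⟨hlt, hm0⟩⟩ := (hfr.and_eventually hev).exists
    refine ⟨m, hm0, hm, ?_⟩
    have hSm : 0 < S m := hSpos m hm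
    have h1 : 1 / S m ≤ (dist (x m) (y m) + 1) / S m := by
      gcongr
      have := dist_nonneg (x := x m) (y := y m); linarith
    have h2' : 1 / S m < 1 / (max c 0 + 1) := lt_of_le_of_lt h1 hlt
    have h3 : max c 0 + 1 < S m := by
      rw [div_lt_div_iff₀ hSm (by positivity)] at h2'
      linarith
    have : c ≤ max c 0 := le_max_left _ _
    linarith
  obtain ⟨k, hkmono, hPk, hgrow⟩ := extraction_growth key
  have hSkpos : ∀ j, 0 < S (k j) := fun j => hSpos _ (hPk j)
  have hSmono : ∀ j, S (k 0) + j ≤ S (k j) := by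
    intro j
    induction j with
    | zero => simp
    | succ i ih => have := hgrow i; push_cast; push_cast at ih; linarith
  set N : ℕ → ℕ := fun j => ⌈S (k j)⌉₊ with hNdef
  have hNmono : StrictMono N := by
    refine strictMono_nat_of_lt_succ (fun j => ?_)
    have h1 : (⌈S (k j)⌉₊ : ℝ) < S (k j) + 1 := Nat.ceil_lt_add_one (hSkpos j).le
    have h2' : S (k (j+1)) ≤ (⌈S (k (j+1))⌉₊ : ℝ) := Nat.le_ceil _
    have := hgrow j
    exact_mod_cast lt_of_lt_of_le (by linarith : (⌈S (k j)⌉₊ : ℝ) < (⌈S (k (j+1))⌉₊ : ℝ)) le_rfl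
  set u : ℕ → X := fun n => if h : ∃ j, N j = n then x (k h.choose) else x₀ with hu
  set v : ℕ → X := fun n => if h : ∃ j, N j = n then y (k h.choose) else x₀ with hv
  have hchoose : ∀ j (h : ∃ j', N j' = N j), h.choose = j :=
    fun j h => hNmono.injective h.choose_spec
  have huv : ∀ j, u (N j) = x (k j) ∧ v (N j) = y (k j) := by
    intro j
    have hj : ∃ j', N j' = N j := ⟨j, rfl⟩
    constructor
    · show (if h : ∃ j', N j' = N j then x (k h.choose) else x₀) = x (k j)
      rw [dif_pos hj, hchoose j hj]
    · show (if h : ∃ j', N j' = N j then y (k h.choose) else x₀) = y (k j)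
      rw [dif_pos hj, hchoose j hj]
  have hub : ∀ n : ℕ, dist (u n) x₀ ≤ 1 * n + 0 := by
    intro n
    rw [one_mul, add_zero]
    show dist (if h : ∃ j, N j = n then x (k h.choose) else x₀) x₀ ≤ (n : ℝ)
    split_ifs with h
    · have hc := h.choose_spec
      calc dist (x (k h.choose)) x₀ ≤ S (k h.choose) := by
            have := dist_nonneg (x := y (k h.choose)) (y := x₀); rw [hSdef]; dsimp; linarith
        _ ≤ (⌈S (k h.choose)⌉₊ : ℝ) := Nat.le_ceil _
        _ = (n : ℝ) := by exact_mod_cast (hc : (⌈S (k h.choose)⌉₊ : ℕ) = n)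
    · rw [dist_self]; positivity
  have hvb : ∀ n : ℕ, dist (v n) x₀ ≤ 1 * n + 0 := by
    intro n
    rw [one_mul, add_zero]
    show dist (if h : ∃ j, N j = n then y (k h.choose) else x₀) x₀ ≤ (n : ℝ)
    split_ifs with h
    · have hc := h.choose_spec
      calc dist (y (k h.choose)) x₀ ≤ S (k h.choose) := by
            have := dist_nonneg (x := x (k h.choose)) (y := x₀); rw [hSdef]; dsimp; linarith
        _ ≤ (⌈S (k h.choose)⌉₊ : ℝ) := Nat.le_ceil _
        _ = (n : ℝ) := by exact_mod_cast (hc : (⌈S (k h.choose)⌉₊ : ℕ) = n)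
    · rw [dist_self]; positivity
  -- premise of h2
  have hprem : Tendsto (fun n : ℕ => dist (u n) (v n) / n) atTop (𝓝 0) := by
    rw [tendsto_zero_iff_cd (fun n => div_nonneg dist_nonneg (Nat.cast_nonneg n))]
    intro ε' hε'
    have hev := (tendsto_zero_iff_cd (fun m => div_nonneg (by positivity) (hS0 m))).1 hxy ε' hε'
    obtain ⟨K₀, hK₀⟩ := eventually_atTop.1 hev
    refine eventually_atTop.2 ⟨N K₀ + 1, fun n hn => ?_⟩
    show dist (if h : ∃ j, N j = n then x (k h.choose) else x₀)
      (if h : ∃ j, N j = n then y (k h.choose) else x₀) / n < ε'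
    split_ifs with h
    · set j := h.choose with hj
      have hjn : N j = n := h.choose_spec
      have hjK : K₀ < j := by
        by_contra hle
        push_neg at hle
        have : N j ≤ N K₀ := hNmono.monotone hle
        omega
      have hkj : K₀ ≤ k j := le_trans (le_of_lt hjK) (le_trans hkmono.le_apply (le_refl _))
      have hr := hK₀ (k j) hkj
      have hSj : 0 < S (k j) := hSkpos j
      have hSn : S (k j) ≤ (n : ℝ) := by
        rw [← hjn]; exact_mod_cast Nat.le_ceil _
      have hnpos : (0 : ℝ) < n := lt_of_lt_of_le hSj hSn
      have hd0 : (0:ℝ) ≤ dist (x (k j)) (y (k j)) := dist_nonneg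
      calc dist (x (k j)) (y (k j)) / (n : ℝ) ≤ dist (x (k j)) (y (k j)) / S (k j) := by
            gcongr
        _ ≤ (dist (x (k j)) (y (k j)) + 1) / S (k j) := by gcongr; linarith
        _ < ε' := hr
    · rw [dist_self, zero_div]; exact hε'
  have hconc := h2 u v ⟨1, 0, hub⟩ ⟨1, 0, hvb⟩ hprem
  rw [tendsto_zero_iff_cd (fun n => div_nonneg dist_nonneg (Nat.cast_nonneg n))] at hconc
  obtain ⟨N₁, hN₁⟩ := eventually_atTop.1 (hconc (ε/2) (by linarith))
  -- pick j large
  set j := max N₁ 1 with hjdef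
  set n := N j with hndef
  have hnN₁ : N₁ ≤ n := le_trans (le_max_left _ _) hNmono.le_apply
  have hlt := hN₁ n hnN₁
  have hun : u n = x (k j) := (huv j).1
  have hvn : v n = y (k j) := (huv j).2
  rw [hun, hvn] at hlt
  have hS1 : 1 ≤ S (k j) := by
    have h0 := hSkpos 0
    have := hSmono j
    have hj1 : (1:ℝ) ≤ (j:ℕ) := by exact_mod_cast le_max_right N₁ 1
    linarith
  have hnlt : (n : ℝ) < S (k j) + 1 := by
    rw [hndef]; exact_mod_cast Nat.ceil_lt_add_one (hSkpos j).le
  have hnpos : (0 : ℝ) < n := by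
    have : S (k j) ≤ (n:ℝ) := by rw [hndef]; exact_mod_cast Nat.le_ceil _
    linarith
  have hPj : ε ≤ dist (f (x (k j))) (f (y (k j))) / S (k j) := hPk j
  have hd : ε * S (k j) ≤ dist (f (x (k j))) (f (y (k j))) :=
    (le_div_iff₀ (hSkpos j)).1 hPj
  have hd2 : dist (f (x (k j))) (f (y (k j))) < ε/2 * n := (div_lt_iff₀ hnpos).1 hlt
  nlinarith [hSkpos j]

set_option maxHeartbeats 1000000 in
lemma lemC {X Y : Type*} [MetricSpace X] [MetricSpace Y] (x₀ : X) (y₀ : Y) (f : X → Y)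
    (hpt : ∃ A B : ℝ, ∀ x : X, dist (f x) y₀ ≤ A * dist x x₀ + B)
    (h2 : ∀ x y : ℕ → X,
        Tendsto (fun k : ℕ => (dist (x k) (y k) + 1) / (dist (x k) x₀ + dist (y k) x₀))
          atTop (𝓝 0) →
        Tendsto (fun k : ℕ => dist (f (x k)) (f (y k)) / (dist (x k) x₀ + dist (y k) x₀))
          atTop (𝓝 0))
    (x x' : ℕ → X)
    (hb1 : ∃ A B : ℝ, ∀ n : ℕ, dist (x n) x₀ ≤ A * n + B)
    (hb2 : ∃ A B : ℝ, ∀ n : ℕ, dist (x' n) x₀ ≤ A * n + B)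
    (hd : Tendsto (fun n : ℕ => dist (x n) (x' n) / n) atTop (𝓝 0)) :
    Tendsto (fun n : ℕ => dist (f (x n)) (f (x' n)) / n) atTop (𝓝 0) := by
  classical
  obtain ⟨A₀, B₀, hfb₀⟩ := hpt
  set A := max A₀ 1 with hA
  set B := max B₀ 0 with hB
  have hA1 : 1 ≤ A := le_max_right _ _
  have hApos : 0 < A := by linarith
  have hB0 : 0 ≤ B := le_max_right _ _
  have hfb : ∀ z : X, dist (f z) y₀ ≤ A * dist z x₀ + B := by
    intro z
    refine le_trans (hfb₀ z) (add_le_add ?_ (le_max_left _ _))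
    exact mul_le_mul_of_nonneg_right (le_max_left _ _) dist_nonneg
  obtain ⟨A₁, B₁, hx1⟩ := hb1
  obtain ⟨A₂, B₂, hx2⟩ := hb2
  set C := max A₁ 0 + max A₂ 0 with hC
  set D := max B₁ 0 + max B₂ 0 with hD
  have hC0 : 0 ≤ C := by positivity
  have hD0 : 0 ≤ D := by positivity
  set S : ℕ → ℝ := fun n => dist (x n) x₀ + dist (x' n) x₀ with hS
  have hS0 : ∀ n, 0 ≤ S n := fun n => by positivity
  have hSub : ∀ n : ℕ, S n ≤ C * n + D := by
    intro n
    have h1 : dist (x n) x₀ ≤ max A₁ 0 * n + max B₁ 0 :=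
      le_trans (hx1 n) (add_le_add (mul_le_mul_of_nonneg_right (le_max_left _ _)
        (Nat.cast_nonneg n)) (le_max_left _ _))
    have h2' : dist (x' n) x₀ ≤ max A₂ 0 * n + max B₂ 0 :=
      le_trans (hx2 n) (add_le_add (mul_le_mul_of_nonneg_right (le_max_left _ _)
        (Nat.cast_nonneg n)) (le_max_left _ _))
    rw [hS, hC, hD]; dsimp; linarith
  rw [tendsto_zero_iff_cd (fun n => div_nonneg dist_nonneg (Nat.cast_nonneg n))]
  by_contra hcon
  push_neg at hcon
  obtain ⟨ε, hε, hfr⟩ := hcon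
  -- every index with the property has n ≥ 1 and ε n ≤ the distance
  have hPfact : ∀ n : ℕ, ε ≤ dist (f (x n)) (f (x' n)) / n →
      1 ≤ n ∧ ε * n ≤ dist (f (x n)) (f (x' n)) := by
    intro n hn
    have hn1 : 1 ≤ n := by
      by_contra h0
      push_neg at h0
      interval_cases n
      simp only [Nat.cast_zero, div_zero] at hn
      linarith
    have hnpos : (0:ℝ) < n := by exact_mod_cast hn1
    exact ⟨hn1, (le_div_iff₀ hnpos).1 hn⟩
  obtain ⟨φ, hφmono, hφ⟩ := extraction_of_frequently_atTop hfr
  -- lower bound on S along φ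
  have hSlow : ∀ j : ℕ, ε * (φ j) ≤ A * S (φ j) + 2 * B := by
    intro j
    have h1 := (hPfact _ (hφ j)).2
    have h2' : dist (f (x (φ j))) (f (x' (φ j))) ≤ A * S (φ j) + 2 * B := by
      have ht := dist_triangle (f (x (φ j))) y₀ (f (x' (φ j)))
      have hf1 := hfb (x (φ j))
      have hf2 := hfb (x' (φ j))
      rw [dist_comm y₀] at ht
      rw [hS]; dsimp; nlinarith [dist_nonneg (x := x (φ j)) (y := x₀)]
    linarith
  -- apply h2 along the subsequence
  have hprem : Tendsto (fun j : ℕ => (dist (x (φ j)) (x' (φ j)) + 1) /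
      (dist (x (φ j)) x₀ + dist (x' (φ j)) x₀)) atTop (𝓝 0) := by
    rw [tendsto_zero_iff_cd (fun j => div_nonneg (by positivity) (hS0 (φ j)))]
    intro δ hδ
    set η := δ * ε / (4 * A) with hη
    have hηpos : 0 < η := by positivity
    obtain ⟨N₂, hN₂⟩ := eventually_atTop.1
      ((tendsto_zero_iff_cd (fun n => div_nonneg dist_nonneg (Nat.cast_nonneg n))).1 hd η hηpos)
    set J := N₂ + ⌈4 * B / ε⌉₊ + ⌈(4 * A + ε * δ) / (ε * δ)⌉₊ with hJ
    refine eventually_atTop.2 ⟨J, fun j hj => ?_⟩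
    set n := φ j with hn
    have hjn : J ≤ n := le_trans hj hφmono.le_apply
    have hn1 : 1 ≤ n := (hPfact _ (hφ j)).1
    have hnpos : (0:ℝ) < n := by exact_mod_cast hn1
    have hd1 : dist (x n) (x' n) < η * n := by
      have hN2n : N₂ ≤ n := by omega
      have := hN₂ n hN2n
      rw [div_lt_iff₀ hnpos] at this
      linarith
    have h4B : 4 * B ≤ ε * n := by
      have h1 : (⌈4 * B / ε⌉₊ : ℝ) ≤ n := by
        have : ⌈4 * B / ε⌉₊ ≤ n := by omega
        exact_mod_cast this
      have h2' : 4 * B / ε ≤ (⌈4 * B / ε⌉₊ : ℝ) := Nat.le_ceil _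
      have := le_trans h2' h1
      rw [div_le_iff₀ hε] at this
      linarith
    have h4A : 4 * A + ε * δ ≤ ε * δ * n := by
      have h1 : (⌈(4 * A + ε * δ) / (ε * δ)⌉₊ : ℝ) ≤ n := by
        have : ⌈(4 * A + ε * δ) / (ε * δ)⌉₊ ≤ J := by omega
        exact_mod_cast le_trans this hjn
      have h2' : (4 * A + ε * δ) / (ε * δ) ≤ (⌈(4 * A + ε * δ) / (ε * δ)⌉₊ : ℝ) := Nat.le_ceil _
      have := le_trans h2' h1
      rw [div_le_iff₀ (by positivity)] at this
      linarith
    have hSn : ε * n / (2 * A) ≤ S n := by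
      have := hSlow j
      rw [← hn] at this
      rw [div_le_iff₀ (by positivity)]
      nlinarith
    have hSnpos : 0 < S n := lt_of_lt_of_le (by positivity) hSn
    show (dist (x n) (x' n) + 1) / S n < δ
    rw [div_lt_iff₀ hSnpos]
    have h6 : (4:ℝ) * A ≤ δ * ε * n := by
      have := mul_pos hε hδ
      nlinarith
    have hkey : η * n + 1 ≤ δ * (ε * n / (2 * A)) := by
      have heq : δ * (ε * ↑n / (2 * A)) - (η * ↑n + 1) = (δ * ε * ↑n - 4 * A) / (4 * A) := by
        rw [hη]; field_simp; ring
      have hnn : (0:ℝ) ≤ (δ * ε * ↑n - 4 * A) / (4 * A) := by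
        apply div_nonneg _ (by positivity)
        linarith
      linarith
    have h5 : δ * (ε * n / (2 * A)) ≤ δ * S n := by
      apply mul_le_mul_of_nonneg_left hSn (le_of_lt hδ)
    calc dist (x n) (x' n) + 1 < η * (n:ℝ) + 1 := by linarith
      _ ≤ δ * (ε * n / (2 * A)) := hkey
      _ ≤ δ * S n := h5
  have hconc := h2 (fun j => x (φ j)) (fun j => x' (φ j)) hprem
  rw [tendsto_zero_iff_cd (fun j => div_nonneg dist_nonneg (hS0 (φ j)))] at hconc
  set ε' := ε / (C + D + 1) with hε'
  have hε'pos : 0 < ε' := by positivity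
  obtain ⟨J₁, hJ₁⟩ := eventually_atTop.1 (hconc ε' hε'pos)
  set j := J₁ + ⌈4 * B / ε⌉₊ with hj
  have hJj : J₁ ≤ j := Nat.le_add_right _ _
  have hlt := hJ₁ j hJj
  set n := φ j with hn
  have hn1 : 1 ≤ n := (hPfact _ (hφ j)).1
  have hnpos : (0:ℝ) < n := by exact_mod_cast hn1
  have hdl : ε * n ≤ dist (f (x n)) (f (x' n)) := (hPfact _ (hφ j)).2
  -- S n > 0 : from ε n ≤ A S + 2B and ε n ≥ 4 B? need n ≥ 4B/ε
  have h4B : 4 * B ≤ ε * n := by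
    have h1 : (⌈4 * B / ε⌉₊ : ℝ) ≤ n := by
      have : ⌈4 * B / ε⌉₊ ≤ j := by omega
      exact_mod_cast le_trans this hφmono.le_apply
    have h2' : 4 * B / ε ≤ (⌈4 * B / ε⌉₊ : ℝ) := Nat.le_ceil _
    have := le_trans h2' h1
    rw [div_le_iff₀ hε] at this
    linarith
  have hSnpos : 0 < S n := by
    have := hSlow j
    rw [← hn] at this
    nlinarith
  have hSup : S n ≤ (C + D + 1) * n := by
    have h1 := hSub n
    have h2 : (1:ℝ) ≤ n := by exact_mod_cast hn1
    have h3 : D * 1 ≤ D * n := mul_le_mul_of_nonneg_left h2 hD0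
    nlinarith
  have hge : ε' ≤ dist (f (x n)) (f (x' n)) / S n := by
    rw [hε', div_le_div_iff₀ (by positivity) hSnpos]
    have h1 : ε * S n ≤ ε * ((C + D + 1) * n) := mul_le_mul_of_nonneg_left hSup hε.le
    have h3 : (C + D + 1) * (ε * n) ≤ (C + D + 1) * dist (f (x n)) (f (x' n)) :=
      mul_le_mul_of_nonneg_left hdl (by positivity)
    nlinarith
  have hlt' : dist (f (x n)) (f (x' n)) / S n < ε' := hlt
  linarith

/-- Characterization of cone-defined maps: `f : X → Y` is cone-defined iff
(1) `|f(x)| ≤ A|x| + B` for some constants, and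
(2) `(d(x_k,y_k)+1)/(|x_k|+|y_k|) → 0` implies `d(f(x_k),f(y_k))/(|x_k|+|y_k|) → 0`. -/
theorem stmt_3 {X Y : Type*} [MetricSpace X] [MetricSpace Y]
    (x₀ : X) (y₀ : Y) (f : X → Y) :
    ((∀ x : ℕ → X, (∃ A B : ℝ, ∀ n : ℕ, dist (x n) x₀ ≤ A * n + B) →
        ∃ A' B' : ℝ, ∀ n : ℕ, dist (f (x n)) y₀ ≤ A' * n + B') ∧
     (∀ x x' : ℕ → X, (∃ A B : ℝ, ∀ n : ℕ, dist (x n) x₀ ≤ A * n + B) →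
        (∃ A B : ℝ, ∀ n : ℕ, dist (x' n) x₀ ≤ A * n + B) →
        Tendsto (fun n : ℕ => dist (x n) (x' n) / n) atTop (𝓝 0) →
        Tendsto (fun n : ℕ => dist (f (x n)) (f (x' n)) / n) atTop (𝓝 0)))
    ↔
    ((∃ A B : ℝ, ∀ x : X, dist (f x) y₀ ≤ A * dist x x₀ + B) ∧
     (∀ x y : ℕ → X,
        Tendsto (fun k : ℕ => (dist (x k) (y k) + 1) / (dist (x k) x₀ + dist (y k) x₀))
          atTop (𝓝 0) →
        Tendsto (fun k : ℕ => dist (f (x k)) (f (y k)) / (dist (x k) x₀ + dist (y k) x₀))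
          atTop (𝓝 0))) := by
  constructor
  · rintro ⟨h1, h2⟩
    exact ⟨lemA x₀ y₀ f h1, fun x y hxy => lemB x₀ y₀ f h2 x y hxy⟩
  · rintro ⟨hpt, h2⟩
    constructor
    · rintro x ⟨A₁, B₁, hx1⟩
      obtain ⟨A, B, hfb⟩ := hpt
      refine ⟨max A 0 * A₁, max A 0 * B₁ + max B 0, fun n => ?_⟩
      have h1 : dist (f (x n)) y₀ ≤ max A 0 * dist (x n) x₀ + max B 0 :=
        le_trans (hfb (x n)) (add_le_add
          (mul_le_mul_of_nonneg_right (le_max_left _ _) dist_nonneg) (le_max_left _ _))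
      have h2' : max A 0 * dist (x n) x₀ ≤ max A 0 * (A₁ * n + B₁) :=
        mul_le_mul_of_nonneg_left (hx1 n) (le_max_right _ _)
      nlinarith
    · intro x x' hb1 hb2 hd
      exact lemC x₀ y₀ f hpt h2 x x' hb1 hb2 hd
end

section
/- Let X, Y be pointed metric spaces and f : X → Y a map such that there exist C, M > 0, sublinear functions q, κ with: M·d(x,y) − κ(|x|+|y|) ≤ d(f(x),f(y)) ≤ C·d(x,y) + q(|x|+|y|) for all x,y, and a sublinear function c with d(y, f(X)) ≤ c(|y|) for all y ∈ Y. Then there exists a map g : Y → X and constants A, B such that |g(y)| ≤ A·|y| + B for all y ∈ Y, and d(f(g(y)), y) ≤ c(|y|) + 1 for all y. -/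
open Filter Topology Metric

/-- If `f` is cone-bilipschitz and cone-surjective with sublinear defect `c`, then there
is a map `g : Y → X` with `|g(y)|` linearly bounded in `|y|` and `d(f(g(y)),y) ≤ c(|y|)+1`. -/
theorem stmt_11 {X Y : Type*} [MetricSpace X] [MetricSpace Y] [Nonempty X]
    (x₀ : X) (y₀ : Y) (f : X → Y) (C M : ℝ) (hC : 0 < C) (hM : 0 < M)
    (q κ c : ℝ → ℝ)
    (hq_nonneg : ∀ t, 0 ≤ q t) (hκ_nonneg : ∀ t, 0 ≤ κ t) (hc_nonneg : ∀ t, 0 ≤ c t)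
    (hq : Tendsto (fun t => q t / t) atTop (𝓝 0))
    (hκ : Tendsto (fun t => κ t / t) atTop (𝓝 0))
    (hc : Tendsto (fun t => c t / t) atTop (𝓝 0))
    (hupper : ∀ x y : X, dist (f x) (f y) ≤ C * dist x y + q (dist x x₀ + dist y x₀))
    (hlower : ∀ x y : X, M * dist x y - κ (dist x x₀ + dist y x₀) ≤ dist (f x) (f y))
    (hsurj : ∀ y : Y, Metric.infDist y (Set.range f) ≤ c (dist y y₀)) :
    ∃ (g : Y → X) (A B : ℝ),
      (∀ y : Y, dist (g y) x₀ ≤ A * dist y y₀ + B) ∧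
      (∀ y : Y, dist (f (g y)) y ≤ c (dist y y₀) + 1) := by
  classical
  -- near-preimage existence
  have hx : ∀ y : Y, ∃ x : X, dist y (f x) < c (dist y y₀) + 1 := by
    intro y
    have h1 : Metric.infDist y (Set.range f) < c (dist y y₀) + 1 :=
      lt_of_le_of_lt (hsurj y) (by linarith)
    rw [Metric.infDist_lt_iff (Set.range_nonempty f)] at h1
    obtain ⟨z, ⟨x, rfl⟩, hz⟩ := h1
    exact ⟨x, hz⟩
  -- threshold for κ
  have hκ' : ∃ T : ℝ, ∀ t ≥ T, κ t / t < M / 2 := by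
    have := hκ.eventually (eventually_lt_nhds (by positivity : (0:ℝ) < M / 2))
    exact eventually_atTop.mp this
  obtain ⟨T, hT⟩ := hκ'
  set T₀ : ℝ := max T 1 with hT₀def
  have hT₀pos : (0:ℝ) < T₀ := lt_of_lt_of_le one_pos (le_max_right _ _)
  have hκbound : ∀ t ≥ T₀, κ t ≤ M / 2 * t := by
    intro t ht
    have htpos : 0 < t := lt_of_lt_of_le hT₀pos ht
    have := hT t (le_trans (le_max_left _ _) ht)
    rw [div_lt_iff₀ htpos] at this
    linarith
  set K : ℝ := dist (f x₀) y₀ with hKdef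
  have hK0 : 0 ≤ K := dist_nonneg
  set g : Y → X := fun y =>
    if dist (f x₀) y ≤ c (dist y y₀) + 1 then x₀ else Classical.choose (hx y) with hgdef
  refine ⟨g, 4 / M, T₀ + (4 * K + 2) / M, fun y => ?_, fun y => ?_⟩
  · by_cases h : dist (f x₀) y ≤ c (dist y y₀) + 1
    · have : g y = x₀ := by simp [hgdef, h]
      rw [this, dist_self]
      have : 0 ≤ 4 / M * dist y y₀ := by positivity
      have : 0 ≤ (4 * K + 2) / M := by positivity
      linarith
    · have hgy : g y = Classical.choose (hx y) := by simp [hgdef, h]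
      push_neg at h
      have hspec : dist y (f (g y)) < c (dist y y₀) + 1 := by
        rw [hgy]; exact Classical.choose_spec (hx y)
      -- c (|y|) ≤ |y| + K from h
      have hc1 : c (dist y y₀) + 1 ≤ dist y y₀ + K := by
        have := dist_triangle (f x₀) y₀ y
        rw [dist_comm y₀ y] at this
        linarith [h.le, this]
      set D : ℝ := dist (g y) x₀ with hDdef
      have hD0 : 0 ≤ D := dist_nonneg
      have hlow := hlower (g y) x₀
      rw [dist_self, add_zero] at hlow
      have hup : dist (f (g y)) (f x₀) ≤ 2 * dist y y₀ + 2 * K + 1 := by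
        have t1 : dist (f (g y)) (f x₀) ≤ dist (f (g y)) y + dist y (f x₀) :=
          dist_triangle _ _ _
        have t2 : dist y (f x₀) ≤ dist y y₀ + K := by
          have := dist_triangle y y₀ (f x₀)
          rw [dist_comm y₀ (f x₀)] at this
          linarith
        rw [dist_comm (f (g y)) y] at t1
        linarith [hspec.le]
      have hMD : M * D ≤ κ D + 2 * dist y y₀ + 2 * K + 1 := by linarith
      by_cases hDT : D ≤ T₀
      · have : 0 ≤ 4 / M * dist y y₀ := by positivity
        have : 0 ≤ (4 * K + 2) / M := by positivity
        linarith
      · push_neg at hDT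
        have hκD := hκbound D hDT.le
        have hMD2 : M / 2 * D ≤ 2 * dist y y₀ + 2 * K + 1 := by linarith
        have : D ≤ (4 * dist y y₀ + 4 * K + 2) / M := by
          rw [le_div_iff₀ hM]
          linarith
        have hexp : (4 * dist y y₀ + 4 * K + 2) / M
            = 4 / M * dist y y₀ + (4 * K + 2) / M := by field_simp; ring
        rw [hexp] at this
        linarith
  · by_cases h : dist (f x₀) y ≤ c (dist y y₀) + 1
    · have hgy : g y = x₀ := by simp [hgdef, h]
      rw [hgy]; exact h
    · have hgy : g y = Classical.choose (hx y) := by simp [hgdef, h]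
      have hspec : dist y (f (g y)) < c (dist y y₀) + 1 := by
        rw [hgy]; exact Classical.choose_spec (hx y)
      rw [dist_comm]
      exact hspec.le
end
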